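/- Let k ≥ 1 be an integer and G a simple graph. Then G is k-extendable if and only if for every vertex subset S of G such that the induced subgraph G[S] contains k pairwise disjoint edges, the number of odd components of G − S is at most |S| − 2k. -/

import Mathlib

open SimpleGraph

/-- `G` is `k`-extendable: every matching of size `k` in `G` extends to a
perfect matching of `G`. -/
def kExtendable {V : Type*} (G : SimpleGraph V) (k : ℕ) : Prop :=
  ∀ M : G.Subgraph, M.IsMatching → M.edgeSet.ncard = k →
    ∃ P : G.Subgraph, P.IsPerfectMatching ∧ M.edgeSet ⊆ P.edgeSet

/-- The number of odd components (connected components of odd order) of a graph. -/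
noncomputable def oddComp {α : Type*} (H : SimpleGraph α) : ℕ :=
  Nat.card {c : H.ConnectedComponent // Odd (Nat.card c.supp)}

namespace TutteAux

variable {V : Type*} (G : SimpleGraph V)

/-- `D` is closed in `B`: no `G`-edges leave `D` into `B`. -/
def Closed (B D : Set V) : Prop :=
  ∀ ⦃x⦄, x ∈ D → ∀ ⦃y⦄, y ∈ B → G.Adj x y → y ∈ D

/-- `D` is the vertex set of a connected component of `G.induce B`. -/
def CompSet (B D : Set V) : Prop :=
  D ⊆ B ∧ D.Nonempty ∧ Closed G B D ∧ (G.induce D).Connected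

variable {G}

lemma walk_confine {B D : Set V} (hcl : Closed G B D)
    {u v : ↥B} (p : (G.induce B).Walk u v) (hu : ↑u ∈ D) :
    ∃ hv : ↑v ∈ D, (G.induce D).Reachable ⟨↑u, hu⟩ ⟨↑v, hv⟩ := by
  induction p with
  | nil => exact ⟨hu, Reachable.refl _⟩
  | @cons a b c h p ih =>
    have hadj : G.Adj (a : V) (b : V) := h
    have hb : (b : V) ∈ D := hcl hu b.2 hadj
    obtain ⟨hv, hr⟩ := ih hb
    exact ⟨hv, Reachable.trans (Adj.reachable (by exact hadj)) hr⟩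

lemma reachable_of_reachable_induce {B D : Set V} (hDB : D ⊆ B) {u v : ↥D}
    (h : (G.induce D).Reachable u v) :
    (G.induce B).Reachable ⟨↑u, hDB u.2⟩ ⟨↑v, hDB v.2⟩ := by
  have := h.map (G.induceHomOfLE hDB).toHom
  exact this

lemma compSet_iff {B D : Set V} :
    (∃ c : (G.induce B).ConnectedComponent, Subtype.val '' c.supp = D) ↔ CompSet G B D := by
  constructor
  · rintro ⟨c, rfl⟩
    have hsub : Subtype.val '' c.supp ⊆ B := by
      rintro x ⟨u, _, rfl⟩; exact u.2
    have hcl : Closed G B (Subtype.val '' c.supp) := by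
      rintro x ⟨u, hu, rfl⟩ y hy hadj
      refine ⟨⟨y, hy⟩, ?_, rfl⟩
      rw [ConnectedComponent.mem_supp_iff] at hu ⊢
      rw [← hu]
      exact ConnectedComponent.sound (Adj.reachable (by exact hadj.symm))
    refine ⟨hsub, ?_, hcl, ?_⟩
    · obtain ⟨u, hu⟩ := c.exists_rep
      exact ⟨↑u, ⟨u, hu, rfl⟩⟩
    · rw [connected_iff_exists_forall_reachable]
      obtain ⟨u, hu⟩ := c.exists_rep
      have hum : (u : V) ∈ Subtype.val '' c.supp :=
        ⟨u, hu, rfl⟩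
      refine ⟨⟨↑u, hum⟩, ?_⟩
      rintro ⟨y, ⟨w, hw, rfl⟩⟩
      have hr : (G.induce B).Reachable u w := by
        rw [ConnectedComponent.mem_supp_iff] at hw
        exact ConnectedComponent.exact (hu.trans hw.symm)
      obtain ⟨hv, hr'⟩ := walk_confine hcl hr.some hum
      exact hr'
  · rintro ⟨hDB, ⟨x, hx⟩, hcl, hconn⟩
    refine ⟨(G.induce B).connectedComponentMk ⟨x, hDB hx⟩, ?_⟩
    ext y
    constructor
    · rintro ⟨u, hu, rfl⟩
      rw [ConnectedComponent.mem_supp_iff] at hu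
      have hr : (G.induce B).Reachable ⟨x, hDB hx⟩ u := (ConnectedComponent.exact hu).symm
      obtain ⟨hv, -⟩ := walk_confine hcl hr.some hx
      exact hv
    · intro hy
      refine ⟨⟨y, hDB hy⟩, ?_, rfl⟩
      rw [ConnectedComponent.mem_supp_iff]
      apply ConnectedComponent.sound
      exact (reachable_of_reachable_induce hDB
        (hconn.preconnected ⟨y, hy⟩ ⟨x, hx⟩ : _)).mono (le_refl _) |>.mono (le_refl _)


lemma odd_suppV_iff {B : Set V} (c : (G.induce B).ConnectedComponent) :
    Odd ((Subtype.val '' c.supp).ncard) ↔ Odd (Nat.card c.supp) := by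
  rw [Set.ncard_image_of_injective _ Subtype.val_injective, Nat.card_coe_set_eq]

lemma oddComp_induce_eq (B : Set V) :
    oddComp (G.induce B) = {D | CompSet G B D ∧ Odd D.ncard}.ncard := by
  classical
  set f : {c : (G.induce B).ConnectedComponent // Odd (Nat.card c.supp)} → Set V :=
    fun c => Subtype.val '' c.1.supp with hf
  have hinj : Function.Injective f := by
    rintro ⟨c, hc⟩ ⟨c', hc'⟩ h
    simp only [hf] at h
    have := Subtype.val_injective.image_injective h
    exact Subtype.ext (ConnectedComponent.supp_injective this)
  have hrange : Set.range f = {D | CompSet G B D ∧ Odd D.ncard} := by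
    ext D
    constructor
    · rintro ⟨⟨c, hc⟩, rfl⟩
      exact ⟨compSet_iff.mp ⟨c, rfl⟩, (odd_suppV_iff c).mpr hc⟩
    · rintro ⟨hD, hodd⟩
      obtain ⟨c, rfl⟩ := compSet_iff.mpr hD
      exact ⟨⟨c, (odd_suppV_iff c).mp hodd⟩, rfl⟩
  rw [oddComp, ← Nat.card_range_of_injective hinj, hrange, Nat.card_coe_set_eq]

/-- A nonempty closed subset of a connected induced subgraph is everything. -/
lemma closed_connected_eq {B F : Set V} (hconn : (G.induce B).Connected)
    (hFB : F ⊆ B) (hcl : Closed G B F) (hne : F.Nonempty) : F = B := by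
  obtain ⟨x, hx⟩ := hne
  refine Set.Subset.antisymm hFB fun y hy => ?_
  have hr : (G.induce B).Reachable ⟨x, hFB hx⟩ ⟨y, hy⟩ :=
    hconn.preconnected _ _
  obtain ⟨hv, -⟩ := walk_confine hcl hr.some hx
  exact hv

lemma compSet_union_iff {B D E : Set V} (hDB : D ⊆ B) (hcl : Closed G B D) :
    CompSet G B E ↔ CompSet G D E ∨ CompSet G (B \ D) E := by
  have hclBD : Closed G B (B \ D) := by
    intro x hx y hyB hadj
    refine ⟨hyB, fun hyD => hx.2 (hcl hyD hx.1 hadj.symm)⟩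
  constructor
  · rintro ⟨hEB, hne, hclE, hconn⟩
    by_cases hmeet : (E ∩ D).Nonempty
    · left
      have hclED : Closed G E (E ∩ D) := by
        intro z hz y hyE hadj
        exact ⟨hyE, hcl hz.2 (hEB hyE) hadj⟩
      have : E ∩ D = E := closed_connected_eq hconn Set.inter_subset_left hclED hmeet
      have hED : E ⊆ D := by rw [← this]; exact Set.inter_subset_right
      refine ⟨hED, hne, ?_, hconn⟩
      intro x hx y hyD hadj
      exact hclE hx (hDB hyD) hadj
    · right
      have hED : E ⊆ B \ D := fun x hx =>
        ⟨hEB hx, fun hxD => hmeet ⟨x, hx, hxD⟩⟩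
      refine ⟨hED, hne, ?_, hconn⟩
      intro x hx y hyD hadj
      exact hclE hx hyD.1 hadj
  · rintro (⟨hED, hne, hclE, hconn⟩ | ⟨hED, hne, hclE, hconn⟩)
    · refine ⟨hED.trans hDB, hne, ?_, hconn⟩
      intro x hx y hyB hadj
      exact hclE hx (hcl (hED hx) hyB hadj) hadj
    · refine ⟨hED.trans Set.diff_subset, hne, ?_, hconn⟩
      intro x hx y hyB hadj
      exact hclE hx (hclBD (hED hx) hyB hadj) hadj

lemma oddComp_split [Finite V] {B D : Set V} (hDB : D ⊆ B) (hcl : Closed G B D) :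
    oddComp (G.induce B) = oddComp (G.induce D) + oddComp (G.induce (B \ D)) := by
  rw [oddComp_induce_eq, oddComp_induce_eq, oddComp_induce_eq]
  have hsplit : {E | CompSet G B E ∧ Odd E.ncard} =
      {E | CompSet G D E ∧ Odd E.ncard} ∪ {E | CompSet G (B \ D) E ∧ Odd E.ncard} := by
    ext E
    simp only [Set.mem_setOf_eq, Set.mem_union, compSet_union_iff hDB hcl, or_and_right]
  rw [hsplit, Set.ncard_union_eq ?_ (Set.toFinite _) (Set.toFinite _)]
  rw [Set.disjoint_left]
  rintro E ⟨⟨hED, ⟨x, hx⟩, -, -⟩, -⟩ ⟨⟨hED', -, -, -⟩, -⟩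
  exact (hED' hx).2 (hED hx)

lemma oddComp_of_connected {B : Set V} (hconn : (G.induce B).Connected) :
    oddComp (G.induce B) = if Odd B.ncard then 1 else 0 := by
  rw [oddComp_induce_eq]
  have hBne : B.Nonempty := by
    have := hconn.nonempty
    obtain ⟨⟨x, hx⟩⟩ := this
    exact ⟨x, hx⟩
  have hcs : ∀ E, CompSet G B E ↔ E = B := by
    intro E
    constructor
    · rintro ⟨hEB, hne, hcl, -⟩
      exact closed_connected_eq hconn hEB hcl hne
    · rintro rfl
      exact ⟨le_refl _, hBne, fun x _ y hy _ => hy, hconn⟩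
  by_cases hodd : Odd B.ncard
  · rw [if_pos hodd]
    have : {E | CompSet G B E ∧ Odd E.ncard} = {B} := by
      ext E; simp only [Set.mem_setOf_eq, hcs, Set.mem_singleton_iff]
      exact ⟨fun h => h.1, fun h => ⟨h, h ▸ hodd⟩⟩
    rw [this, Set.ncard_singleton]
  · rw [if_neg hodd]
    have : {E | CompSet G B E ∧ Odd E.ncard} = ∅ := by
      ext E; simp only [Set.mem_setOf_eq, hcs, Set.mem_empty_iff_false, iff_false, not_and]
      rintro rfl; exact hodd
    rw [this, Set.ncard_empty]

lemma oddComp_mod_two [Finite V] (B : Set V) :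
    oddComp (G.induce B) % 2 = B.ncard % 2 := by
  have h : Odd (Nat.card {c : (G.induce B).ConnectedComponent | Odd (Nat.card c.supp)}) ↔
      Odd (Nat.card ↥B) := by
    rw [← (G.induce B).odd_ncard_oddComponents]
    simp only [oddComponents, Nat.card_coe_set_eq]
  have h1 : Nat.card ↥B = B.ncard := Nat.card_coe_set_eq B
  have h2 : Nat.card {c : (G.induce B).ConnectedComponent | Odd (Nat.card c.supp)} =
      oddComp (G.induce B) := rfl
  rw [h1, h2] at h
  rw [Nat.odd_iff, Nat.odd_iff] at h
  rcases Nat.mod_two_eq_zero_or_one (oddComp (G.induce B)) with h' | h' <;>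
    rcases Nat.mod_two_eq_zero_or_one B.ncard with h'' | h'' <;> omega

variable {M : G.Subgraph}

lemma edge_repr (e : Sym2 V) (he : e ∈ M.edgeSet) :
    ∃ p : V × V, s(p.1, p.2) = e ∧ M.Adj p.1 p.2 := by
  induction e with
  | _ x y => exact ⟨(x, y), rfl, Subgraph.mem_edgeSet.mp he⟩

lemma IsMatching.ncard_verts (hM : M.IsMatching) :
    M.verts.ncard = 2 * M.edgeSet.ncard := by
  classical
  have repr : ∀ e : M.edgeSet, ∃ p : V × V, s(p.1, p.2) = (e : Sym2 V) ∧ M.Adj p.1 p.2 :=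
    fun e => edge_repr e.1 e.2
  choose f hf hadj using repr
  have hmem : ∀ (e : M.edgeSet) (b : Bool),
      (if b then (f e).1 else (f e).2) ∈ M.verts := by
    intro e b
    cases b
    · exact M.edge_vert (hadj e).symm
    · exact M.edge_vert (hadj e)
  set g : M.edgeSet × Bool → M.verts :=
    fun p => ⟨if p.2 then (f p.1).1 else (f p.1).2, hmem p.1 p.2⟩ with hg
  -- each (e, b) gives a vertex v with M.Adj v w and e = s(v, w)
  have key : ∀ (e : M.edgeSet) (b : Bool), ∃ w,
      M.Adj (if b then (f e).1 else (f e).2) w ∧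
        (e : Sym2 V) = s((if b then (f e).1 else (f e).2), w) := by
    intro e b
    cases b
    · exact ⟨(f e).1, (hadj e).symm, by rw [← hf e]; simp [Sym2.eq_swap]⟩
    · exact ⟨(f e).2, hadj e, by rw [← hf e]; simp⟩
  have hginj : Function.Injective g := by
    rintro ⟨e, b⟩ ⟨e', b'⟩ hgeq
    have hv : (if b then (f e).1 else (f e).2) = (if b' then (f e').1 else (f e').2) :=
      congrArg Subtype.val hgeq
    obtain ⟨w, hw, hew⟩ := key e b
    obtain ⟨w', hw', hew'⟩ := key e' b'
    rw [← hv] at hw' hew'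
    have hvm : (if b then (f e).1 else (f e).2) ∈ M.verts := hmem e b
    have huniq := hM hvm
    obtain ⟨w₀, -, huniq₀⟩ := huniq
    have hww : w = w' := by rw [huniq₀ w hw, huniq₀ w' hw']
    have hee : e = e' := Subtype.ext (by rw [hew, hew', hww])
    subst hee
    have hbb : b = b' := by
      by_contra hbb
      have hne : (f e).1 ≠ (f e).2 := by
        intro hc
        exact (M.adj_sub (hadj e)).ne (by rw [hc])
      cases b <;> cases b' <;> simp_all
    exact by rw [hbb]
  have hgsurj : Function.Surjective g := by
    rintro ⟨v, hv⟩
    obtain ⟨w, hw, -⟩ := hM hv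
    have he : s(v, w) ∈ M.edgeSet := Subgraph.mem_edgeSet.mpr hw
    set e : M.edgeSet := ⟨s(v, w), he⟩ with heq
    have hfe : s((f e).1, (f e).2) = s(v, w) := hf e
    rw [Sym2.eq_iff] at hfe
    rcases hfe with ⟨h1, -⟩ | ⟨-, h2⟩
    · exact ⟨(e, true), Subtype.ext (by simp [hg, h1])⟩
    · exact ⟨(e, false), Subtype.ext (by simp [hg, h2])⟩
  have hcard : Nat.card M.verts = Nat.card (M.edgeSet × Bool) :=
    (Nat.card_congr (Equiv.ofBijective g ⟨hginj, hgsurj⟩)).symm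
  rw [← Nat.card_coe_set_eq, ← Nat.card_coe_set_eq, hcard, Nat.card_prod]
  simp [Nat.card_eq_fintype_card, mul_comm]

lemma odd_comp_matched_outside [Fintype V] {P : G.Subgraph} (hP : P.IsPerfectMatching)
    {S : Set V} (c : (G.induce Sᶜ).ConnectedComponent) (hodd : Odd (Nat.card c.supp)) :
    ∃ v w, v ∈ Subtype.val '' c.supp ∧ w ∈ S ∧ P.Adj v w := by
  classical
  by_contra h
  push_neg at h
  set D : Set V := Subtype.val '' c.supp with hD
  have hDS : D ⊆ Sᶜ := by rintro x ⟨u, -, rfl⟩; exact u.2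
  have hN : (P.induce D).IsMatching := by
    intro v hv
    rw [Subgraph.induce_verts] at hv
    obtain ⟨w, hw, huniq⟩ := hP.1 (hP.2 v)
    have hwS : w ∉ S := fun hwS => h v w hv hwS hw
    have hwD : w ∈ D := by
      obtain ⟨u, hu, rfl⟩ := hv
      refine ⟨⟨w, hwS⟩, ?_, rfl⟩
      rw [ConnectedComponent.mem_supp_iff] at hu ⊢
      rw [← hu]
      apply ConnectedComponent.sound
      exact Adj.reachable (by exact (P.adj_sub hw).symm)
    refine ⟨w, ⟨hv, hwD, hw⟩, ?_⟩
    rintro y ⟨-, -, hy⟩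
    exact huniq y hy
  have heven : Even ((P.induce D).verts.ncard) := by
    haveI : Fintype ((P.induce D).verts) := Fintype.ofFinite _
    have := hN.even_card
    rwa [Set.ncard_eq_toFinset_card']
  rw [Subgraph.induce_verts, hD, Set.ncard_image_of_injective _ Subtype.val_injective] at heven
  rw [Nat.even_iff] at heven
  rw [Nat.odd_iff, Nat.card_coe_set_eq] at hodd
  omega

lemma oddComp_add_le [Fintype V] {P M : G.Subgraph} (hP : P.IsPerfectMatching)
    (hM : M.IsMatching) (hMP : M.edgeSet ⊆ P.edgeSet) {S : Set V} (hMS : M.verts ⊆ S) :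
    oddComp (G.induce Sᶜ) + M.verts.ncard ≤ S.ncard := by
  classical
  have key : ∀ c : {c : (G.induce Sᶜ).ConnectedComponent // Odd (Nat.card c.supp)},
      ∃ w, w ∈ S \ M.verts ∧ ∃ v, v ∈ Subtype.val '' c.1.supp ∧ P.Adj v w := by
    rintro ⟨c, hc⟩
    obtain ⟨v, w, hv, hwS, hadj⟩ := odd_comp_matched_outside hP c hc
    refine ⟨w, ⟨hwS, ?_⟩, v, hv, hadj⟩
    intro hwM
    obtain ⟨u, hu, -⟩ := hM hwM
    have hPu : P.Adj w u := Subgraph.mem_edgeSet.mp (hMP (Subgraph.mem_edgeSet.mpr hu))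
    obtain ⟨w', -, huniq⟩ := hP.1 (hP.2 w)
    have : u = v := (huniq u hPu).trans (huniq v hadj.symm).symm
    subst this
    have hvM : u ∈ M.verts := M.edge_vert hu.symm
    have : u ∈ Sᶜ := by
      obtain ⟨u', -, rfl⟩ := hv
      exact u'.2
    exact this (hMS hvM)
  choose F hF₁ hF₂ using key
  have hFinj : Function.Injective F := by
    rintro ⟨c, hc⟩ ⟨c', hc'⟩ heq
    obtain ⟨v, hv, hadj⟩ := hF₂ ⟨c, hc⟩
    obtain ⟨v', hv', hadj'⟩ := hF₂ ⟨c', hc'⟩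
    rw [heq] at hadj
    obtain ⟨w', -, huniq⟩ := hP.1 (hP.2 (F ⟨c', hc'⟩))
    have hvv : v = v' := (huniq v hadj.symm).trans (huniq v' hadj'.symm).symm
    subst hvv
    obtain ⟨u, hu, rfl⟩ := hv
    obtain ⟨u', hu', hval⟩ := hv'
    have : u = u' := Subtype.val_injective hval.symm
    subst this
    rw [ConnectedComponent.mem_supp_iff] at hu hu'
    exact Subtype.ext (hu ▸ hu')
  set F' : {c : (G.induce Sᶜ).ConnectedComponent // Odd (Nat.card c.supp)} → ↥(S \ M.verts) :=
    fun c => ⟨F c, hF₁ c⟩ with hF'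
  have hFinj' : Function.Injective F' := fun a b h => hFinj (congrArg Subtype.val h)
  have hle : oddComp (G.induce Sᶜ) ≤ Nat.card ↥(S \ M.verts) :=
    Nat.card_le_card_of_injective F' hFinj'
  rw [Nat.card_coe_set_eq] at hle
  have := Set.ncard_diff_add_ncard_of_subset hMS (Set.toFinite _)
  omega

lemma tutte_sets [Fintype V] (G : SimpleGraph V) (n : ℕ) :
    ∀ (A : Set V), A.ncard = n →
      (∀ S : Set V, S ⊆ A → oddComp (G.induce (A \ S)) ≤ S.ncard) →
      ∃ M : G.Subgraph, M.IsMatching ∧ M.verts = A := by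
  induction n using Nat.strong_induction_on with
  | _ n ih =>
  intro A hA hcond
  classical
  rcases Set.eq_empty_or_nonempty A with rfl | hAne
  · exact ⟨⊥, fun v hv => absurd hv (by simp), by simp⟩
  -- maximal tight set
  set Tset : Set (Set V) := {S | S ⊆ A ∧ oddComp (G.induce (A \ S)) = S.ncard} with hTset
  have hTe : (∅ : Set V) ∈ Tset := by
    refine ⟨Set.empty_subset _, le_antisymm ?_ (by simp [Set.ncard_empty])⟩
    simpa using hcond ∅ (Set.empty_subset A)
  obtain ⟨S, hSTset, hSmax⟩ :=
    Set.Finite.exists_maximalFor Set.ncard Tset (Set.toFinite _) ⟨∅, hTe⟩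
  obtain ⟨hSA, htight⟩ := hSTset
  set B : Set V := A \ S with hB
  have hnotight : ∀ S'' : Set V, S'' ⊆ A → S.ncard < S''.ncard →
      oddComp (G.induce (A \ S'')) < S''.ncard := by
    intro S'' hsub hlt
    rcases lt_or_ge (oddComp (G.induce (A \ S''))) S''.ncard with h | h
    · exact h
    · exfalso
      have heq : oddComp (G.induce (A \ S'')) = S''.ncard := le_antisymm (hcond S'' hsub) h
      have := hSmax (j := S'') ⟨hsub, heq⟩ (le_of_lt hlt)
      omega
  -- Step 1 : all components of the induced graph on B are odd
  have hodd : ∀ c : (G.induce B).ConnectedComponent,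
      Odd ((Subtype.val '' c.supp).ncard) := by
    intro c
    by_contra hev
    obtain ⟨hDB, hDne, hDcl, hDconn⟩ := (compSet_iff (D := Subtype.val '' c.supp)).mp ⟨c, rfl⟩
    set D : Set V := Subtype.val '' c.supp with hD
    obtain ⟨v, hv⟩ := hDne
    have hvB : v ∈ B := hDB hv
    have hsplitB : oddComp (G.induce B) = oddComp (G.induce D) + oddComp (G.induce (B \ D)) :=
      oddComp_split hDB hDcl
    have hD0 : oddComp (G.induce D) = 0 := by
      rw [oddComp_of_connected hDconn, if_neg hev]
    have hcl' : Closed G (B \ {v}) (D \ {v}) := by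
      intro x hx y hy hadj
      exact ⟨hDcl hx.1 hy.1 hadj, hy.2⟩
    have hsub' : D \ {v} ⊆ B \ {v} := Set.diff_subset_diff_left hDB
    have hsplit' : oddComp (G.induce (B \ {v})) =
        oddComp (G.induce (D \ {v})) + oddComp (G.induce ((B \ {v}) \ (D \ {v}))) :=
      oddComp_split hsub' hcl'
    have hset : (B \ {v}) \ (D \ {v}) = B \ D := by
      ext y
      simp only [Set.mem_diff, Set.mem_singleton_iff]
      constructor
      · rintro ⟨⟨hyB, hyv⟩, hyD⟩
        exact ⟨hyB, fun hD' => hyD ⟨hD', hyv⟩⟩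
      · rintro ⟨hyB, hyD⟩
        exact ⟨⟨hyB, fun h => hyD (h ▸ hv)⟩, fun h => hyD h.1⟩
    have hpar : oddComp (G.induce (D \ {v})) % 2 = (D \ {v}).ncard % 2 := oddComp_mod_two _
    have hdcard : (D \ {v}).ncard + 1 = D.ncard := Set.ncard_diff_singleton_add_one hv
    have hDeven : D.ncard % 2 = 0 := Nat.even_iff.mp (Nat.not_odd_iff_even.mp hev)
    have h1 : 1 ≤ oddComp (G.induce (D \ {v})) := by omega
    have hS2 : insert v S ⊆ A := Set.insert_subset hvB.1 hSA
    have hAS2 : A \ insert v S = B \ {v} := by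
      rw [hB, ← Set.union_singleton, ← Set.diff_diff]
    have hcard2 : (insert v S).ncard = S.ncard + 1 :=
      Set.ncard_insert_of_notMem hvB.2 (Set.toFinite _)
    have hlt := hnotight (insert v S) hS2 (by omega)
    rw [hAS2, hsplit', hset] at hlt
    omega
  -- Step 2 : factor-critical components
  have hcrit : ∀ c : (G.induce B).ConnectedComponent, ∀ v ∈ Subtype.val '' c.supp,
      ∃ Mc : G.Subgraph, Mc.IsMatching ∧ Mc.verts = (Subtype.val '' c.supp) \ {v} := by
    intro c v hv
    obtain ⟨hDB, hDne, hDcl, hDconn⟩ := (compSet_iff (D := Subtype.val '' c.supp)).mp ⟨c, rfl⟩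
    set D : Set V := Subtype.val '' c.supp with hD
    have hDodd : D.ncard % 2 = 1 := Nat.odd_iff.mp (hodd c)
    have hdcard : (D \ {v}).ncard + 1 = D.ncard := Set.ncard_diff_singleton_add_one hv
    have hvB : v ∈ B := hDB hv
    have hDA : D ⊆ A := hDB.trans Set.diff_subset
    have hsplitB : oddComp (G.induce B) = oddComp (G.induce D) + oddComp (G.induce (B \ D)) :=
      oddComp_split hDB hDcl
    have hD1 : oddComp (G.induce D) = 1 := by
      rw [oddComp_of_connected hDconn, if_pos (hodd c)]
    have hlt : (D \ {v}).ncard < n := by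
      rw [← hA]
      exact Set.ncard_lt_ncard
        ⟨(Set.diff_subset.trans hDA), fun hts => (hts (hDA hv)).2 rfl⟩ (Set.toFinite _)
    refine ih _ hlt _ rfl ?_
    intro S' hS'sub
    by_contra hgt
    push_neg at hgt
    set m := oddComp (G.induce ((D \ {v}) \ S')) with hm
    have hpar : m % 2 = ((D \ {v}) \ S').ncard % 2 := oddComp_mod_two _
    have hc1 : ((D \ {v}) \ S').ncard + S'.ncard = (D \ {v}).ncard :=
      Set.ncard_diff_add_ncard_of_subset hS'sub (Set.toFinite _)
    have hm2 : S'.ncard + 2 ≤ m := by omega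
    -- the enlarged tight set
    set W : Set V := S ∪ insert v S' with hW
    have hS'D : S' ⊆ D := hS'sub.trans Set.diff_subset
    have hinsD : insert v S' ⊆ D := Set.insert_subset hv hS'D
    have hWA : W ⊆ A := Set.union_subset hSA (hinsD.trans hDA)
    have hdisj : Disjoint S (insert v S') := by
      rw [Set.disjoint_left]
      intro y hyS hyI
      exact (hDB (hinsD hyI)).2 hyS
    have hvS' : v ∉ S' := fun h => (hS'sub h).2 rfl
    have hWcard : W.ncard = S.ncard + (S'.ncard + 1) := by
      rw [hW, Set.ncard_union_eq hdisj (Set.toFinite _) (Set.toFinite _),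
        Set.ncard_insert_of_notMem hvS' (Set.toFinite _)]
    have hAW : A \ W = (B \ D) ∪ ((D \ {v}) \ S') := by
      ext y
      simp only [Set.mem_diff, Set.mem_union, Set.mem_insert_iff, Set.mem_singleton_iff, hW]
      constructor
      · rintro ⟨hyA, hyW⟩
        push_neg at hyW
        by_cases hyD : y ∈ D
        · exact Or.inr ⟨⟨hyD, hyW.2.1⟩, hyW.2.2⟩
        · exact Or.inl ⟨⟨hyA, hyW.1⟩, hyD⟩
      · rintro (⟨⟨hyA, hyS⟩, hyD⟩ | ⟨⟨hyD, hyv⟩, hyS'⟩)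
        · refine ⟨hyA, ?_⟩
          push_neg
          exact ⟨hyS, fun h => hyD (h ▸ hv), fun h => hyD (hS'D h)⟩
        · refine ⟨hDA hyD, ?_⟩
          push_neg
          exact ⟨(hDB hyD).2, hyv, hyS'⟩
    have hclosed : Closed G (A \ W) (B \ D) := by
      intro x hx y hy hadj
      have hyB : y ∈ B := by
        refine ⟨hy.1, fun hyS => hy.2 (Or.inl hyS)⟩
      refine ⟨hyB, fun hyD => hx.2 (hDcl hyD hx.1 hadj.symm)⟩
    have hsubW : B \ D ⊆ A \ W := by
      rw [hAW]; exact Set.subset_union_left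
    have hsplitW : oddComp (G.induce (A \ W)) =
        oddComp (G.induce (B \ D)) + oddComp (G.induce ((A \ W) \ (B \ D))) :=
      oddComp_split hsubW hclosed
    have hset2 : (A \ W) \ (B \ D) = (D \ {v}) \ S' := by
      rw [hAW, Set.union_diff_cancel_left]
      rintro y ⟨hy1, hy2⟩
      exact absurd hy2.1.1 hy1.2
    have hfinal := hnotight W hWA (by omega)
    rw [hsplitW, hset2] at hfinal
    omega
  -- Step 3 : Hall's condition and a system of distinct representatives
  haveI : Fintype ((G.induce B).ConnectedComponent) := Fintype.ofFinite _
  set t : (G.induce B).ConnectedComponent → Finset V := fun c =>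
    S.toFinset.filter (fun s => ∃ x ∈ Subtype.val '' c.supp, G.Adj x s) with ht
  have hHall : ∀ A'' : Finset ((G.induce B).ConnectedComponent),
      A''.card ≤ (A''.biUnion t).card := by
    intro A2
    set S0 : Set V := ↑(A2.biUnion t) with hS0
    have hS0S : S0 ⊆ S := by
      intro y hy
      obtain ⟨c, -, hc⟩ := Finset.mem_biUnion.mp hy
      exact Set.mem_toFinset.mp (Finset.mem_filter.mp hc).1
    have hS0A : S0 ⊆ A := hS0S.trans hSA
    have hkey : ∀ c ∈ A2, CompSet G (A \ S0) (Subtype.val '' c.supp) ∧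
        Odd ((Subtype.val '' c.supp).ncard) := by
      intro c hc
      obtain ⟨hDB, hDne, hDcl, hDconn⟩ := (compSet_iff (D := Subtype.val '' c.supp)).mp ⟨c, rfl⟩
      refine ⟨⟨?_, hDne, ?_, hDconn⟩, hodd c⟩
      · intro y hy
        exact ⟨(hDB hy).1, fun hyS0 => (hDB hy).2 (hS0S hyS0)⟩
      · intro x hx y hy hadj
        by_cases hyS : y ∈ S
        · exfalso
          apply hy.2
          rw [hS0]
          refine Finset.mem_coe.mpr (Finset.mem_biUnion.mpr ⟨c, hc, ?_⟩)
          exact Finset.mem_filter.mpr ⟨Set.mem_toFinset.mpr hyS, x, hx, hadj⟩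
        · exact hDcl hx ⟨hy.1, hyS⟩ hadj
    have hinj2 : Set.InjOn (fun c : (G.induce B).ConnectedComponent =>
        Subtype.val '' c.supp) ↑A2 := by
      intro c1 _ c2 _ h
      exact ConnectedComponent.supp_injective (Subtype.val_injective.image_injective h)
    have h1 : ((fun c : (G.induce B).ConnectedComponent => Subtype.val '' c.supp) '' ↑A2).ncard
        = A2.card := by
      rw [Set.ncard_image_of_injOn hinj2, Set.ncard_coe_finset]
    have h2 : ((fun c : (G.induce B).ConnectedComponent => Subtype.val '' c.supp) '' ↑A2)
        ⊆ {E | CompSet G (A \ S0) E ∧ Odd E.ncard} := by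
      rintro E ⟨c, hc, rfl⟩
      exact hkey c hc
    have h3 : A2.card ≤ oddComp (G.induce (A \ S0)) := by
      rw [oddComp_induce_eq, ← h1]
      exact Set.ncard_le_ncard h2 (Set.toFinite _)
    have h4 := hcond S0 hS0A
    rw [show S0.ncard = (A2.biUnion t).card from Set.ncard_coe_finset _] at h4
    omega
  obtain ⟨f, hfinj, hft⟩ := (Finset.all_card_le_biUnion_card_iff_exists_injective t).mp hHall
  have hfS : ∀ c, f c ∈ S := fun c => Set.mem_toFinset.mp (Finset.mem_filter.mp (hft c)).1
  have hfex : ∀ c, ∃ x ∈ Subtype.val '' c.supp, G.Adj x (f c) :=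
    fun c => (Finset.mem_filter.mp (hft c)).2
  -- Step 4 : f is surjective onto S
  have hcount : Nat.card ((G.induce B).ConnectedComponent) = S.ncard := by
    rw [← htight, oddComp]
    exact (Nat.card_congr (Equiv.subtypeUnivEquiv
      (fun c => (odd_suppV_iff c).mp (hodd c)))).symm
  have hfsurj : ∀ s ∈ S, ∃ c, f c = s := by
    intro s hs
    set f' : (G.induce B).ConnectedComponent → ↥S := fun c => ⟨f c, hfS c⟩ with hf'
    have hinj' : Function.Injective f' := fun a b h => hfinj (congrArg Subtype.val h)
    have hbij : Function.Bijective f' := by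
      rw [Nat.bijective_iff_injective_and_card]
      refine ⟨hinj', ?_⟩
      rw [Nat.card_coe_set_eq]
      exact hcount
    obtain ⟨c, hc⟩ := hbij.2 ⟨s, hs⟩
    exact ⟨c, congrArg Subtype.val hc⟩
  -- Step 5 : assemble the matching
  choose x hxD hxadj using fun c => hfex c
  choose Mc hMc1 hMc2 using fun c => hcrit c (x c) (hxD c)
  set N : (G.induce B).ConnectedComponent → G.Subgraph := fun c =>
    G.subgraphOfAdj (hxadj c) ⊔ Mc c with hN
  have hDsubB : ∀ c : (G.induce B).ConnectedComponent, Subtype.val '' c.supp ⊆ B := by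
    rintro c y ⟨u, -, rfl⟩
    exact u.2
  have hNmatch : ∀ c, (N c).IsMatching := by
    intro c
    apply Subgraph.IsMatching.sup (Subgraph.IsMatching.subgraphOfAdj _) (hMc1 c)
    rw [(Subgraph.IsMatching.subgraphOfAdj _).support_eq_verts,
      (hMc1 c).support_eq_verts, hMc2, subgraphOfAdj_verts]
    rw [Set.disjoint_left]
    rintro a ha haD
    rcases Set.mem_insert_iff.mp ha with rfl | ha'
    · exact haD.2 rfl
    · rw [Set.mem_singleton_iff] at ha'
      subst ha'
      exact (hDsubB c haD.1).2 (hfS c)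
  have hNverts : ∀ c, (N c).verts = Subtype.val '' c.supp ∪ {f c} := by
    intro c
    rw [hN]
    simp only [Subgraph.verts_sup, subgraphOfAdj_verts, hMc2]
    ext y
    simp only [Set.mem_union, Set.mem_insert_iff, Set.mem_singleton_iff, Set.mem_diff]
    constructor
    · rintro ((rfl | rfl) | ⟨hyD, -⟩)
      · exact Or.inl (hxD c)
      · exact Or.inr rfl
      · exact Or.inl hyD
    · rintro (hyD | rfl)
      · by_cases hyx : y = x c
        · exact Or.inl (Or.inl hyx)
        · exact Or.inr ⟨hyD, hyx⟩
      · exact Or.inl (Or.inr rfl)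
  have hMmatch : (⨆ c, N c).IsMatching := by
    apply Subgraph.IsMatching.iSup hNmatch
    intro c c' hne
    rw [(hNmatch c).support_eq_verts, (hNmatch c').support_eq_verts, hNverts, hNverts]
    have hsupp : Disjoint (Subtype.val '' c.supp) (Subtype.val '' c'.supp) :=
      Set.disjoint_image_of_injective Subtype.val_injective
        (pairwise_disjoint_supp_connectedComponent _ hne)
    rw [Set.disjoint_union_left]
    constructor <;> rw [Set.disjoint_union_right]
    · refine ⟨hsupp, Set.disjoint_singleton_right.mpr ?_⟩
      rintro ⟨u, -, hu⟩
      have := u.2.2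
      rw [hu] at this
      exact this (hfS c')
    · constructor
      · rw [Set.disjoint_left]
        rintro a ha ⟨u, -, hu⟩
        rw [Set.mem_singleton_iff] at ha
        have := u.2.2
        rw [hu, ha] at this
        exact this (hfS c)
      · rw [Set.disjoint_singleton_right, Set.mem_singleton_iff]
        exact fun h => hne (hfinj h.symm)
  refine ⟨⨆ c, N c, hMmatch, ?_⟩
  rw [Subgraph.verts_iSup]
  ext y
  simp only [Set.mem_iUnion]
  constructor
  · rintro ⟨c, hc⟩
    rw [hNverts c] at hc
    rcases hc with hyD | hyf
    · exact (hDsubB c hyD).1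
    · rw [Set.mem_singleton_iff] at hyf
      exact hSA (hyf ▸ hfS c)
  · intro hyA
    by_cases hyS : y ∈ S
    · obtain ⟨c, rfl⟩ := hfsurj y hyS
      refine ⟨c, ?_⟩
      rw [hNverts c]
      exact Or.inr rfl
    · refine ⟨(G.induce B).connectedComponentMk ⟨y, ⟨hyA, hyS⟩⟩, ?_⟩
      rw [hNverts]
      exact Or.inl ⟨⟨y, ⟨hyA, hyS⟩⟩, rfl, rfl⟩

end TutteAux

open TutteAux

theorem k_extendable_iff {V : Type*} [Fintype V] (G : SimpleGraph V) (k : ℕ)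
    (hk : 1 ≤ k) :
    kExtendable G k ↔
      ∀ S : Set V,
        (∃ M : G.Subgraph, M.IsMatching ∧ M.edgeSet.ncard = k ∧ M.verts ⊆ S) →
          (oddComp (G.induce Sᶜ) : ℤ) ≤ (S.ncard : ℤ) - 2 * k := by
  constructor
  · rintro hext S ⟨M, hM, hMk, hMS⟩
    obtain ⟨P, hP, hMP⟩ := hext M hM hMk
    have h := oddComp_add_le hP hM hMP hMS
    have hv : M.verts.ncard = 2 * k := by
      rw [IsMatching.ncard_verts hM, hMk]
    omega
  · intro hcond M hM hMk
    have hv : M.verts.ncard = 2 * k := by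
      rw [IsMatching.ncard_verts hM, hMk]
    have hcondA : ∀ S' : Set V, S' ⊆ M.vertsᶜ →
        oddComp (G.induce (M.vertsᶜ \ S')) ≤ S'.ncard := by
      intro S' hS'
      have h := hcond (M.verts ∪ S') ⟨M, hM, hMk, Set.subset_union_left⟩
      rw [Set.compl_union] at h
      have hsetiff : M.vertsᶜ \ S' = M.vertsᶜ ∩ S'ᶜ := Set.diff_eq _ _
      rw [← hsetiff] at h
      have hdisj : Disjoint M.verts S' := Set.subset_compl_iff_disjoint_left.mp hS'
      have hcard : (M.verts ∪ S').ncard = M.verts.ncard + S'.ncard :=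
        Set.ncard_union_eq hdisj (Set.toFinite _) (Set.toFinite _)
      rw [hcard] at h
      omega
    obtain ⟨M', hM'm, hM'v⟩ := tutte_sets G (M.vertsᶜ.ncard) M.vertsᶜ rfl hcondA
    refine ⟨M ⊔ M', ⟨?_, ?_⟩, Subgraph.edgeSet_mono le_sup_left⟩
    · apply Subgraph.IsMatching.sup hM hM'm
      rw [hM.support_eq_verts, hM'm.support_eq_verts, hM'v]
      exact disjoint_compl_right
    · intro v
      rw [Subgraph.verts_sup, hM'v, Set.union_compl_self]
      exact Set.mem_univ v
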